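/- arXiv:1208.5579 — 2 statements merged into one kernel-verified Lean document; each statement's English description precedes it below -/
import Mathlib

section
/- Every 1-generated F-semilattice A generated by an element a is a free algebra on {a} in the variety it generates: for every algebra B in V(A) and every b ∈ B, the assignment a ↦ b extends to a homomorphism A → B. -/
inductive SLTerm (F : Type) : Type where
  | var : SLTerm F
  | meet : SLTerm F → SLTerm F → SLTerm F
  | act : F → SLTerm F → SLTerm F

/-- Evaluation of a unary term at an element of an `F`-semilattice. -/
def SLTerm.eval {F A : Type} [SemilatticeInf A] [SMul F A] : SLTerm F → A → A
  | .var, a => a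
  | .meet s t, a => s.eval a ⊓ t.eval a
  | .act g t, a => g • t.eval a

inductive SLTermN (F : Type) : Type where
  | var : ℕ → SLTermN F
  | meet : SLTermN F → SLTermN F → SLTermN F
  | act : F → SLTermN F → SLTermN F

def SLTermN.eval {F A : Type} [SemilatticeInf A] [SMul F A] : SLTermN F → (ℕ → A) → A
  | .var n, v => v n
  | .meet s t, v => s.eval v ⊓ t.eval v
  | .act g t, v => g • t.eval v

def SatQI (F : Type) (A : Type) [SemilatticeInf A] [SMul F A]
    (prem : List (SLTermN F × SLTermN F)) (c : SLTermN F × SLTermN F) : Prop :=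
  ∀ v : ℕ → A, (∀ p ∈ prem, p.1.eval v = p.2.eval v) → c.1.eval v = c.2.eval v

/-- `B` belongs to the quasivariety generated by `A`. -/
def InQ (F : Type) (A B : Type) [SemilatticeInf A] [SMul F A]
    [SemilatticeInf B] [SMul F B] : Prop :=
  ∀ prem c, SatQI F A prem c → SatQI F B prem c

/-- `B` belongs to the variety generated by `A`. -/
def InV (F : Type) (A B : Type) [SemilatticeInf A] [SMul F A]
    [SemilatticeInf B] [SMul F B] : Prop :=
  ∀ s t : SLTermN F, (∀ v : ℕ → A, s.eval v = t.eval v) → ∀ v : ℕ → B, s.eval v = t.eval v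

def IsHom (F : Type) {A B : Type} [SemilatticeInf A] [SMul F A] [SemilatticeInf B] [SMul F B]
    (φ : A → B) : Prop :=
  (∀ x y : A, φ (x ⊓ y) = φ x ⊓ φ y) ∧ ∀ (g : F) (x : A), φ (g • x) = g • φ x

/-- The subuniverse of `A` generated by `a`. -/
def genSet (F : Type) {A : Type} [SemilatticeInf A] [SMul F A] (a : A) : Set A :=
  Set.range fun t : SLTerm F => t.eval a

/-- The quasivariety generated by `A` is a minimal quasivariety of `F`-semilattices. -/
def MinGen (F : Type) [CommGroup F] (A : Type) [SemilatticeInf A] [MulAction F A] : Prop :=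
  Nontrivial A ∧
    ∀ (B : Type) [SemilatticeInf B] [MulAction F B],
      (∀ (g : F) (x y : B), g • (x ⊓ y) = g • x ⊓ g • y) →
      InQ F A B → Nontrivial B → InQ F B A


section Aux

variable {F A : Type} [CommGroup F] [SemilatticeInf A] [MulAction F A]

lemma eval_inf (hA : ∀ (g : F) (x y : A), g • (x ⊓ y) = g • x ⊓ g • y)
    (t : SLTerm F) (x y : A) : t.eval (x ⊓ y) = t.eval x ⊓ t.eval y := by
  induction t with
  | var => rfl
  | meet s t ihs iht =>
      simp only [SLTerm.eval, ihs, iht]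
      exact inf_inf_inf_comm _ _ _ _
  | act g t ih => simp only [SLTerm.eval, ih, hA]

lemma eval_smul (hA : ∀ (g : F) (x y : A), g • (x ⊓ y) = g • x ⊓ g • y)
    (t : SLTerm F) (g : F) (x : A) : t.eval (g • x) = g • t.eval x := by
  induction t with
  | var => rfl
  | meet s t ihs iht => simp only [SLTerm.eval, ihs, iht, hA]
  | act h t ih =>
      simp only [SLTerm.eval, ih, smul_smul, mul_comm]

lemma eval_comm (hA : ∀ (g : F) (x y : A), g • (x ⊓ y) = g • x ⊓ g • y)
    (s u : SLTerm F) (x : A) : s.eval (u.eval x) = u.eval (s.eval x) := by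
  induction u with
  | var => rfl
  | meet u1 u2 ih1 ih2 =>
      simp only [SLTerm.eval, eval_inf hA, ih1, ih2]
  | act g u ih =>
      simp only [SLTerm.eval, eval_smul hA, ih]

/-- Translate a unary term to an `SLTermN` using variable `0`. -/
def SLTerm.toN {F : Type} : SLTerm F → SLTermN F
  | .var => .var 0
  | .meet s t => .meet s.toN t.toN
  | .act g t => .act g t.toN

lemma toN_eval {F A : Type} [SemilatticeInf A] [SMul F A] (t : SLTerm F) (v : ℕ → A) :
    t.toN.eval v = t.eval (v 0) := by
  induction t with
  | var => rfl
  | meet s t ihs iht => simp only [SLTerm.toN, SLTermN.eval, SLTerm.eval, ihs, iht]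
  | act g t ih => simp only [SLTerm.toN, SLTermN.eval, SLTerm.eval, ih]

end Aux

/-- A `1`-generated `F`-semilattice is free on its generator in the variety it generates. -/
theorem stmt_6 (F : Type) [CommGroup F] (A : Type) [SemilatticeInf A] [MulAction F A]
    (hA : ∀ (g : F) (x y : A), g • (x ⊓ y) = g • x ⊓ g • y)
    (a : A) (hgen : ∀ x : A, ∃ t : SLTerm F, t.eval a = x) :
    ∀ (B : Type) [SemilatticeInf B] [MulAction F B],
      (∀ (g : F) (x y : B), g • (x ⊓ y) = g • x ⊓ g • y) →
      InV F A B → ∀ b : B, ∃ φ : A → B, IsHom F φ ∧ φ a = b := by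
  intro B _ _ hB hV b
  -- key: equality at `a` transfers to `b`
  have key : ∀ s t : SLTerm F, s.eval a = t.eval a → s.eval b = t.eval b := by
    intro s t hst
    have hAll : ∀ v : ℕ → A, (SLTerm.toN s).eval v = (SLTerm.toN t).eval v := by
      intro v
      rw [toN_eval, toN_eval]
      obtain ⟨u, hu⟩ := hgen (v 0)
      rw [← hu, eval_comm hA s u, eval_comm hA t u, hst]
    have := hV _ _ hAll (fun _ => b)
    rwa [toN_eval, toN_eval] at this
  classical
  refine ⟨fun x => (Classical.choose (hgen x)).eval b, ⟨?_, ?_⟩, ?_⟩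
  · intro x y
    have hx := Classical.choose_spec (hgen x)
    have hy := Classical.choose_spec (hgen y)
    have hxy := Classical.choose_spec (hgen (x ⊓ y))
    have : (Classical.choose (hgen (x ⊓ y))).eval a
        = (SLTerm.meet (Classical.choose (hgen x)) (Classical.choose (hgen y))).eval a := by
      simp only [SLTerm.eval, hx, hy, hxy]
    exact key _ _ this
  · intro g x
    have hx := Classical.choose_spec (hgen x)
    have hgx := Classical.choose_spec (hgen (g • x))
    have : (Classical.choose (hgen (g • x))).eval a
        = (SLTerm.act g (Classical.choose (hgen x))).eval a := by
      simp only [SLTerm.eval, hx, hgx]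
    exact key _ _ this
  · have ha := Classical.choose_spec (hgen a)
    have : (Classical.choose (hgen a)).eval a = (SLTerm.var : SLTerm F).eval a := ha
    exact key _ _ this
end

section
/- Let F be a finite abelian group. The map sending a minimal quasivariety R of F-semilattices to the stabilizer H_R = {g ∈ F : g(a) = a} of the free generator a of the 1-generated free algebra of R is a bijection from the set of minimal quasivarieties of F-semilattices onto the set of subgroups of F; its inverse sends a subgroup H to the quasivariety generated by the Maróti semilattice M(H,F). -/
open Pointwise

/-- The universe of the Maróti semilattice: the empty set together with all
left cosets of `H`. -/
def Maroti (F : Type) [CommGroup F] (H : Subgroup F) : Type :=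
  {S : Set F // S = ∅ ∨ ∃ g : F, S = g • (H : Set F)}

namespace Maroti

variable {F : Type} [CommGroup F] {H : Subgroup F}

theorem coset_eq_of_mem {g₁ g₂ x : F} (h1 : x ∈ g₁ • (H : Set F))
    (h2 : x ∈ g₂ • (H : Set F)) : g₁ • (H : Set F) = g₂ • (H : Set F) := by
  rw [Set.mem_smul_set_iff_inv_smul_mem, smul_eq_mul] at h1 h2
  ext z
  simp only [Set.mem_smul_set_iff_inv_smul_mem, smul_eq_mul]
  constructor
  · intro hz
    have : g₂⁻¹ * z = (g₂⁻¹ * x) * (g₁⁻¹ * x)⁻¹ * (g₁⁻¹ * z) := by group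
    rw [this]
    exact H.mul_mem (H.mul_mem h2 (H.inv_mem h1)) hz
  · intro hz
    have : g₁⁻¹ * z = (g₁⁻¹ * x) * (g₂⁻¹ * x)⁻¹ * (g₂⁻¹ * z) := by group
    rw [this]
    exact H.mul_mem (H.mul_mem h1 (H.inv_mem h2)) hz

theorem inter_mem {S T : Set F} (hS : S = ∅ ∨ ∃ g : F, S = g • (H : Set F))
    (hT : T = ∅ ∨ ∃ g : F, T = g • (H : Set F)) :
    S ∩ T = ∅ ∨ ∃ g : F, S ∩ T = g • (H : Set F) := by
  rcases hS with rfl | ⟨g₁, rfl⟩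
  · left; simp
  rcases hT with rfl | ⟨g₂, rfl⟩
  · left; simp
  rcases Set.eq_empty_or_nonempty (g₁ • (H : Set F) ∩ g₂ • (H : Set F)) with he | ⟨x, hx₁, hx₂⟩
  · left; exact he
  · right
    refine ⟨g₂, ?_⟩
    rw [coset_eq_of_mem hx₁ hx₂, Set.inter_self]

instance : Min (Maroti F H) :=
  ⟨fun x y => ⟨x.1 ∩ y.1, inter_mem x.2 y.2⟩⟩

theorem inf_val (x y : Maroti F H) : (x ⊓ y).1 = x.1 ∩ y.1 := rfl

instance : SemilatticeInf (Maroti F H) :=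
  SemilatticeInf.mk' (fun x y => Subtype.ext (Set.inter_comm x.1 y.1))
    (fun x y z => Subtype.ext (Set.inter_assoc x.1 y.1 z.1))
    (fun x => Subtype.ext (Set.inter_self x.1))

noncomputable instance : SMul F (Maroti F H) :=
  ⟨fun g x => ⟨g • x.1, by
    rcases x.2 with h | ⟨g', h⟩
    · left; rw [h]; exact Set.smul_set_empty
    · right; exact ⟨g * g', by rw [h, smul_smul]⟩⟩⟩

theorem smul_val (g : F) (x : Maroti F H) : (g • x).1 = g • x.1 := rfl

noncomputable instance : MulAction F (Maroti F H) where
  one_smul x := Subtype.ext (one_smul F x.1)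
  mul_smul g h x := Subtype.ext (mul_smul g h x.1)

end Maroti

/-- The distinguished generator `1 • H` of the Maróti semilattice. -/
noncomputable def marotiGen (F : Type) [CommGroup F] (H : Subgroup F) : Maroti F H :=
  ⟨(1 : F) • (H : Set F), Or.inr ⟨1, rfl⟩⟩


section StmtAux

open Function

variable {F : Type} [CommGroup F]

set_option linter.unusedSectionVars false

lemma mem_smul_coset (H : Subgroup F) (g : F) : g ∈ g • (H : Set F) :=
  Set.mem_smul_set.mpr ⟨1, H.one_mem, mul_one g⟩

lemma mem_of_coset_eq {g k : F} {H : Subgroup F}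
    (h : g • (H : Set F) = k • (H : Set F)) : k⁻¹ * g ∈ H := by
  have h1 := mem_smul_coset H g
  rw [h, Set.mem_smul_set_iff_inv_smul_mem] at h1
  simpa using h1

lemma coset_eq_of_mem' {g k : F} {H : Subgroup F} (h : k⁻¹ * g ∈ H) :
    g • (H : Set F) = k • (H : Set F) := by
  apply Maroti.coset_eq_of_mem (x := g) (mem_smul_coset H g)
  rw [Set.mem_smul_set_iff_inv_smul_mem]
  simpa using h

lemma maroti_id {H : Subgroup F} {h : F} (hh : h ∈ H) (u : Maroti F H) : h • u = u := by
  apply Subtype.ext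
  rw [Maroti.smul_val]
  rcases u.2 with he | ⟨g, hg⟩
  · rw [he]; exact Set.smul_set_empty
  · rw [hg, smul_smul]
    have he2 : g⁻¹ * (h * g) = h := by rw [mul_comm h g, inv_mul_cancel_left]
    exact coset_eq_of_mem' (by rw [he2]; exact hh)

lemma maroti_qi {H : Subgroup F} {g : F} (hg : g ∉ H) (u v : Maroti F H)
    (h : g • u = u) : u ⊓ v = u := by
  rcases u.2 with he | ⟨k, hk⟩
  · apply Subtype.ext; rw [Maroti.inf_val, he, Set.empty_inter]
  · exfalso
    apply hg
    have h' : g • u.1 = u.1 := by rw [← Maroti.smul_val, h]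
    rw [hk, smul_smul] at h'
    have h2 := mem_of_coset_eq h'
    rwa [mul_comm g k, inv_mul_cancel_left] at h2

lemma stab_marotiGen (H : Subgroup F) : MulAction.stabilizer F (marotiGen F H) = H := by
  ext g
  rw [MulAction.mem_stabilizer_iff]
  constructor
  · intro h
    have h1 : (g • marotiGen F H).1 = (marotiGen F H).1 := by rw [h]
    rw [Maroti.smul_val] at h1
    unfold marotiGen at h1
    rw [smul_smul, mul_one] at h1
    have h2 := mem_of_coset_eq h1
    simpa using h2
  · intro h
    exact maroti_id h _

lemma maroti_nontrivial (H : Subgroup F) : Nontrivial (Maroti F H) := by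
  refine ⟨⟨⟨∅, Or.inl rfl⟩, marotiGen F H, ?_⟩⟩
  intro h
  have h1 : (1 : F) ∈ (marotiGen F H).1 := mem_smul_coset H 1
  rw [← h] at h1
  exact h1

lemma maroti_distrib (H : Subgroup F) (g : F) (x y : Maroti F H) :
    g • (x ⊓ y) = g • x ⊓ g • y :=
  Subtype.ext (by
    rw [Maroti.smul_val, Maroti.inf_val, Maroti.inf_val, Maroti.smul_val, Maroti.smul_val,
      Set.smul_set_inter])

lemma evalN_hom {A B : Type} [SemilatticeInf A] [SMul F A] [SemilatticeInf B] [SMul F B]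
    {φ : A → B} (h : IsHom F φ) (t : SLTermN F) (v : ℕ → A) :
    t.eval (fun n => φ (v n)) = φ (t.eval v) := by
  induction t with
  | var n => rfl
  | meet s t ihs iht => rw [SLTermN.eval, SLTermN.eval, ihs, iht, h.1]
  | act g t ih => rw [SLTermN.eval, SLTermN.eval, ih, h.2]

lemma inq_of_inj_hom {A C : Type} [SemilatticeInf A] [SMul F A] [SemilatticeInf C] [SMul F C]
    {φ : C → A} (h : IsHom F φ) (hi : Function.Injective φ) : InQ F A C := by
  intro prem c hs v hv
  apply hi
  rw [← evalN_hom h, ← evalN_hom h]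
  exact hs _ (fun p hp => by rw [evalN_hom h, evalN_hom h, hv p hp])

lemma inq_id {A C : Type} [SemilatticeInf A] [SMul F A] [SemilatticeInf C] [SMul F C]
    (hQ : InQ F C A) {h : F} (hid : ∀ u : C, h • u = u) : ∀ u : A, h • u = u := by
  intro u
  have hs : SatQI F C [] (SLTermN.act h (.var 0), .var 0) := by
    intro v _
    simpa [SLTermN.eval] using hid (v 0)
  have h2 := hQ [] _ hs (fun _ => u) (by simp)
  simpa [SLTermN.eval] using h2

lemma inq_qi {A C : Type} [SemilatticeInf A] [SMul F A] [SemilatticeInf C] [SMul F C]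
    (hQ : InQ F C A) {g : F} (hqi : ∀ u v : C, g • u = u → u ⊓ v = u) :
    ∀ u v : A, g • u = u → u ⊓ v = u := by
  intro u w hgu
  have hs : SatQI F C [(SLTermN.act g (.var 0), .var 0)]
      (SLTermN.meet (.var 0) (.var 1), .var 0) := by
    intro v hp
    have h1 := hp _ (List.mem_singleton_self _)
    simp only [SLTermN.eval] at h1 ⊢
    exact hqi (v 0) (v 1) h1
  have h2 := hQ _ _ hs (fun n => if n = 0 then u else w) ?_
  · simpa [SLTermN.eval] using h2
  · intro p hp
    simp only [List.mem_singleton] at hp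
    subst hp
    simpa [SLTermN.eval] using hgu

lemma smul_eval_fixed {A : Type} [SemilatticeInf A] [MulAction F A]
    (hd : ∀ (g : F) (u v : A), g • (u ⊓ v) = g • u ⊓ g • v)
    {h : F} {a : A} (ha : h • a = a) : ∀ t : SLTerm F, h • t.eval a = t.eval a := by
  intro t
  induction t with
  | var => exact ha
  | meet s t ihs iht => rw [SLTerm.eval, hd, ihs, iht]
  | act g t ih => rw [SLTerm.eval, smul_smul, mul_comm h g, ← smul_smul, ih]

lemma exists_emb {B : Type} [SemilatticeInf B] [MulAction F B] (H : Subgroup F) (x bot : B)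
    (hx : ∀ h ∈ H, h • x = x)
    (hbot : ∀ g : F, g • bot = bot)
    (hle : ∀ g : F, bot ≤ g • x)
    (hmeet : ∀ g g' : F, g⁻¹ * g' ∉ H → g • x ⊓ g' • x = bot)
    (hne : ∀ g : F, g • x ≠ bot) :
    ∃ φ : Maroti F H → B, IsHom F φ ∧ Function.Injective φ := by
  classical
  have key : ∀ g g' : F, g⁻¹ * g' ∈ H → g • x = g' • x := by
    intro g g' h
    have h1 : g • ((g⁻¹ * g') • x) = g' • x := by rw [← mul_smul, mul_inv_cancel_left]
    rwa [hx _ h] at h1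
  set φ : Maroti F H → B := fun u =>
    if h : ∃ g : F, u.1 = g • (H : Set F) then h.choose • x else bot with hφ
  have hcoset : ∀ (u : Maroti F H) (g : F), u.1 = g • (H : Set F) → φ u = g • x := by
    intro u g hg
    have hex : ∃ g : F, u.1 = g • (H : Set F) := ⟨g, hg⟩
    rw [hφ]
    simp only [dif_pos hex]
    exact key _ _ (mem_of_coset_eq (hg.symm.trans hex.choose_spec))
  have hempty : ∀ u : Maroti F H, u.1 = ∅ → φ u = bot := by
    intro u hu
    have hn : ¬ ∃ g : F, u.1 = g • (H : Set F) := by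
      rintro ⟨g, hg⟩
      have h1 := mem_smul_coset H g
      rw [← hg, hu] at h1
      exact h1
    show (if h : ∃ g : F, u.1 = g • (H : Set F) then h.choose • x else bot) = bot
    rw [dif_neg hn]
  have hlev : ∀ v : Maroti F H, bot ≤ φ v := by
    intro v
    rcases v.2 with h | ⟨g, h⟩
    · rw [hempty v h]
    · rw [hcoset v g h]; exact hle g
  refine ⟨φ, ⟨?_, ?_⟩, ?_⟩
  · -- meets
    intro u v
    rcases u.2 with hu | ⟨g, hu⟩
    · have h1 : (u ⊓ v).1 = ∅ := by rw [Maroti.inf_val, hu, Set.empty_inter]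
      rw [hempty _ h1, hempty u hu]
      exact (inf_eq_left.mpr (hlev v)).symm
    · rcases v.2 with hv | ⟨g', hv⟩
      · have h1 : (u ⊓ v).1 = ∅ := by rw [Maroti.inf_val, hv, Set.inter_empty]
        rw [hempty _ h1, hempty v hv]
        exact (inf_eq_right.mpr (hlev u)).symm
      · by_cases hgg : g⁻¹ * g' ∈ H
        · have hco : g • (H : Set F) = g' • (H : Set F) := coset_eq_of_mem' (by
            have : (g')⁻¹ * g ∈ H := by
              have := H.inv_mem hgg
              rwa [mul_inv_rev, inv_inv] at this
            exact this)
          have h1 : (u ⊓ v).1 = g • (H : Set F) := by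
            rw [Maroti.inf_val, hu, hv, ← hco, Set.inter_self]
          rw [hcoset _ g h1, hcoset u g hu, hcoset v g' hv, key g g' hgg, inf_idem]
        · have hdis : g • (H : Set F) ∩ g' • (H : Set F) = ∅ := by
            rcases Set.eq_empty_or_nonempty (g • (H : Set F) ∩ g' • (H : Set F)) with he | ⟨z, hz1, hz2⟩
            · exact he
            · exact absurd (mem_of_coset_eq ((Maroti.coset_eq_of_mem hz1 hz2).symm)) hgg
          have h1 : (u ⊓ v).1 = ∅ := by rw [Maroti.inf_val, hu, hv, hdis]
          rw [hempty _ h1, hcoset u g hu, hcoset v g' hv, hmeet g g' hgg]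
  · -- smul
    intro g u
    rcases u.2 with hu | ⟨k, hu⟩
    · have h1 : (g • u).1 = ∅ := by rw [Maroti.smul_val, hu, Set.smul_set_empty]
      rw [hempty _ h1, hempty u hu, hbot]
    · have h1 : (g • u).1 = (g * k) • (H : Set F) := by rw [Maroti.smul_val, hu, smul_smul]
      rw [hcoset _ _ h1, hcoset u k hu, mul_smul]
  · -- injective
    intro u v h
    rcases u.2 with hu | ⟨g, hu⟩
    · rcases v.2 with hv | ⟨g', hv⟩
      · exact Subtype.ext (hu.trans hv.symm)
      · rw [hempty u hu, hcoset v g' hv] at h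
        exact absurd h.symm (hne g')
    · rcases v.2 with hv | ⟨g', hv⟩
      · rw [hcoset u g hu, hempty v hv] at h
        exact absurd h (hne g)
      · rw [hcoset u g hu, hcoset v g' hv] at h
        have hgg : g⁻¹ * g' ∈ H := by
          by_contra hc
          have h1 := hmeet g g' hc
          rw [h, inf_idem] at h1
          exact hne g' h1
        exact Subtype.ext (hu.trans ((coset_eq_of_mem' (by
          have := H.inv_mem hgg
          rwa [mul_inv_rev, inv_inv] at this)).symm.trans hv.symm))

lemma exists_data {B : Type} [SemilatticeInf B] [MulAction F B] [Nontrivial B] [Finite F]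
    (hd : ∀ (g : F) (u v : B), g • (u ⊓ v) = g • u ⊓ g • v) :
    ∃ x bot : B, (∀ g : F, g • bot = bot) ∧ (∀ g : F, bot ≤ g • x) ∧
      (∀ g g' : F, g⁻¹ * g' ∉ MulAction.stabilizer F x → g • x ⊓ g' • x = bot) ∧
      (∀ g : F, g • x ≠ bot) := by
  classical
  by_cases htriv : ∀ (b : B) (g : F), g • b = b
  · obtain ⟨u, v, huv⟩ := exists_pair_ne B
    refine ⟨if u ⊓ v = u then v else u, u ⊓ v, fun g => htriv _ g, ?_, ?_, ?_⟩
    · intro g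
      rw [htriv]
      split_ifs with h
      · exact inf_le_right
      · exact inf_le_left
    · intro g g' hst
      exact absurd (MulAction.mem_stabilizer_iff.mpr (htriv _ _)) hst
    · intro g
      rw [htriv]
      split_ifs with h
      · intro h2
        exact huv (h.symm.trans h2.symm)
      · intro h2
        exact h h2.symm
  · push_neg at htriv
    obtain ⟨a, g₁, hg₁⟩ := htriv
    haveI : Fintype F := Fintype.ofFinite F
    set f : F → B := fun g => g • a with hf
    have smul_inf' : ∀ (g : F) (S : Finset F) (hS : S.Nonempty),
        g • S.inf' hS f = S.inf' hS (fun k => (g * k) • a) := by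
      intro g S hS
      have h1 : g • S.inf' hS f = (InfHom.mk (fun b => g • b) (hd g)) (S.inf' hS f) := rfl
      rw [h1, map_finset_inf']
      refine Finset.inf'_congr hS rfl (fun k _ => ?_)
      show g • (k • a) = (g * k) • a
      rw [mul_smul]
    have smul_eq_image : ∀ (g : F) (S : Finset F) (hS : S.Nonempty),
        g • S.inf' hS f = (S.image (fun k => g * k)).inf' (hS.image _) f := by
      intro g S hS
      rw [smul_inf', Finset.inf'_image]
      rfl
    have image_univ : ∀ g : F, (Finset.univ : Finset F).image (fun k => g * k) = Finset.univ := by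
      intro g
      apply Finset.eq_univ_iff_forall.mpr
      intro k
      exact Finset.mem_image.mpr ⟨g⁻¹ * k, Finset.mem_univ _, by group⟩
    set bot := (Finset.univ : Finset F).inf' Finset.univ_nonempty f with hbotdef
    have hbot_fixed : ∀ g : F, g • bot = bot := by
      intro g
      rw [hbotdef, smul_eq_image]
      exact Finset.inf'_congr _ (image_univ g) (fun k _ => rfl)
    have habot : a ≠ bot := by
      intro h
      apply hg₁
      calc g₁ • a = g₁ • bot := by rw [h]
        _ = bot := hbot_fixed g₁
        _ = a := h.symm
    set P : Finset F → Prop := fun S => ∃ h : S.Nonempty, S.inf' h f ≠ bot with hP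
    have hP1 : P {1} := ⟨Finset.singleton_nonempty 1, by
      rw [Finset.inf'_singleton]
      simpa [hf] using habot⟩
    obtain ⟨S, hSmem, hSmax⟩ := Finset.exists_max_image
      (Finset.univ.filter P) Finset.card ⟨{1}, Finset.mem_filter.mpr ⟨Finset.mem_univ _, hP1⟩⟩
    obtain ⟨hSne, hSx⟩ := (Finset.mem_filter.mp hSmem).2
    have hmax : ∀ T : Finset F, S ⊂ T → ∀ hT : T.Nonempty, T.inf' hT f = bot := by
      intro T hST hT
      by_contra hne'
      have h2 := hSmax T (Finset.mem_filter.mpr ⟨Finset.mem_univ T, ⟨hT, hne'⟩⟩)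
      exact absurd h2 (not_le.mpr (Finset.card_lt_card hST))
    set x := S.inf' hSne f with hxdef
    have hflat : ∀ k : F, k • x ≠ x → x ⊓ k • x = bot := by
      intro k hk
      have himg : S.image (fun z => k * z) ≠ S := by
        intro h
        apply hk
        rw [hxdef, smul_eq_image]
        exact Finset.inf'_congr _ h (fun _ _ => rfl)
      have hsub : S ⊂ S ∪ S.image (fun z => k * z) := by
        refine Finset.ssubset_iff_subset_ne.mpr ⟨Finset.subset_union_left, ?_⟩
        intro h
        apply himg
        apply Finset.eq_of_subset_of_card_le
        · intro z hz
          have h1 : z ∈ S ∪ S.image (fun z => k * z) := Finset.mem_union_right _ hz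
          rwa [← h] at h1
        · rw [Finset.card_image_of_injective _ (mul_right_injective k)]
      have h3 := hmax _ hsub (hSne.mono Finset.subset_union_left)
      rw [Finset.inf'_union hSne (hSne.image _)] at h3
      rw [hxdef, smul_eq_image]
      exact h3
    refine ⟨x, bot, hbot_fixed, ?_, ?_, ?_⟩
    · intro g
      rw [hxdef, smul_eq_image, hbotdef]
      exact Finset.inf'_mono f (Finset.subset_univ _) (hSne.image _)
    · intro g g' hst
      have hk : ¬ (g⁻¹ * g') • x = x := fun h => hst (MulAction.mem_stabilizer_iff.mpr h)
      have h1 := hflat _ hk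
      calc g • x ⊓ g' • x = g • (x ⊓ (g⁻¹ * g') • x) := by
            rw [hd, ← mul_smul, mul_inv_cancel_left]
        _ = bot := by rw [h1, hbot_fixed]
    · intro g h
      apply hSx
      have h1 : x = g⁻¹ • (g • x) := (inv_smul_smul g x).symm
      rw [h, hbot_fixed] at h1
      exact h1

end StmtAux

/-- For a finite abelian group `F`, the correspondence `R ↦ H_R` (the stabilizer of the
free generator of the 1-generated free algebra of `R`) is a bijection between the minimal
quasivarieties of `F`-semilattices and the subgroups of `F`, with inverse
`H ↦ Q(M(H,F))`:  (1) each `M(H,F)` generates a minimal quasivariety whose associated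
stabilizer is `H` (so α ∘ β = id); (2) distinct subgroups give distinct quasivarieties
(β is injective); (3) every minimal quasivariety is generated by some `M(H,F)` (β is
surjective onto the minimal quasivarieties); (4) for a minimal quasivariety generated by a
nontrivial 1-generated algebra `A` with generator `a` (its free algebra), the associated
subgroup is the stabilizer of `a` and `Q(A) = Q(M(H_R,F))` (so β ∘ α = id). -/
theorem stmt_17 (F : Type) [CommGroup F] [Finite F] :
    (∀ H : Subgroup F,
      MinGen F (Maroti F H) ∧ MulAction.stabilizer F (marotiGen F H) = H) ∧
    (∀ H₁ H₂ : Subgroup F,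
      InQ F (Maroti F H₁) (Maroti F H₂) → InQ F (Maroti F H₂) (Maroti F H₁) → H₁ = H₂) ∧
    (∀ (A : Type) [SemilatticeInf A] [MulAction F A],
      (∀ (g : F) (x y : A), g • (x ⊓ y) = g • x ⊓ g • y) → MinGen F A →
      ∃ H : Subgroup F, InQ F A (Maroti F H) ∧ InQ F (Maroti F H) A) ∧
    (∀ (A : Type) [SemilatticeInf A] [MulAction F A] (a : A),
      (∀ (g : F) (x y : A), g • (x ⊓ y) = g • x ⊓ g • y) →
      (∀ x : A, ∃ t : SLTerm F, t.eval a = x) → MinGen F A →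
      InQ F A (Maroti F (MulAction.stabilizer F a)) ∧
        InQ F (Maroti F (MulAction.stabilizer F a)) A) := by
  constructor
  · -- Part 1
    intro H
    refine ⟨⟨maroti_nontrivial H, ?_⟩, stab_marotiGen H⟩
    intro B _ _ hd hQ hBnt
    haveI := hBnt
    have hid : ∀ h ∈ H, ∀ u : B, h • u = u := fun h hh => inq_id hQ (maroti_id hh)
    have hqi : ∀ g ∉ H, ∀ u v : B, g • u = u → u ⊓ v = u :=
      fun g hg => inq_qi hQ (maroti_qi hg)
    obtain ⟨x, bot, hbf, hle, hmeet, hne⟩ := exists_data hd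
    have hstab : MulAction.stabilizer F x = H := by
      apply le_antisymm
      · intro g hgx
        by_contra hg
        have h1 := hqi g hg x bot (MulAction.mem_stabilizer_iff.mp hgx)
        have h2 : x ≤ bot := by rw [← h1]; exact inf_le_right
        have h3 : bot ≤ x := by have := hle 1; rwa [one_smul] at this
        exact hne 1 (by rw [one_smul]; exact le_antisymm h2 h3)
      · intro h hh
        exact MulAction.mem_stabilizer_iff.mpr (hid h hh x)
    rw [← hstab]
    obtain ⟨φ, hφ, hinj⟩ := exists_emb (MulAction.stabilizer F x) x bot
      (fun h hh => MulAction.mem_stabilizer_iff.mp hh) hbf hle hmeet hne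
    exact inq_of_inj_hom hφ hinj
  refine ⟨?_, ?_, ?_⟩
  · -- Part 2
    intro H₁ H₂ h12 h21
    apply le_antisymm
    · intro h hh
      have h1 := inq_id h12 (maroti_id hh) (marotiGen F H₂)
      have h2 := MulAction.mem_stabilizer_iff.mpr h1
      rwa [stab_marotiGen] at h2
    · intro h hh
      have h1 := inq_id h21 (maroti_id hh) (marotiGen F H₁)
      have h2 := MulAction.mem_stabilizer_iff.mpr h1
      rwa [stab_marotiGen] at h2
  · -- Part 3
    intro A _ _ hd hmin
    haveI := hmin.1
    obtain ⟨x, bot, hbf, hle, hmeet, hne⟩ := exists_data hd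
    obtain ⟨φ, hφ, hinj⟩ := exists_emb (MulAction.stabilizer F x) x bot
      (fun h hh => MulAction.mem_stabilizer_iff.mp hh) hbf hle hmeet hne
    refine ⟨MulAction.stabilizer F x, inq_of_inj_hom hφ hinj, ?_⟩
    exact hmin.2 (Maroti F _) (maroti_distrib _) (inq_of_inj_hom hφ hinj) (maroti_nontrivial _)
  · -- Part 4
    intro A _ _ a hd hgen hmin
    haveI := hmin.1
    obtain ⟨x, bot, hbf, hle, hmeet, hne⟩ := exists_data hd
    obtain ⟨φ, hφ, hinj⟩ := exists_emb (MulAction.stabilizer F x) x bot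
      (fun h hh => MulAction.mem_stabilizer_iff.mp hh) hbf hle hmeet hne
    have hQ1 : InQ F A (Maroti F (MulAction.stabilizer F x)) := inq_of_inj_hom hφ hinj
    have hQ2 : InQ F (Maroti F (MulAction.stabilizer F x)) A :=
      hmin.2 (Maroti F _) (maroti_distrib _) hQ1 (maroti_nontrivial _)
    have hKH : MulAction.stabilizer F x = MulAction.stabilizer F a := by
      apply le_antisymm
      · intro g hg
        exact MulAction.mem_stabilizer_iff.mpr (inq_id hQ2 (maroti_id hg) a)
      · intro h hh
        rw [MulAction.mem_stabilizer_iff]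
        obtain ⟨t, ht⟩ := hgen x
        rw [← ht]
        exact smul_eval_fixed hd (MulAction.mem_stabilizer_iff.mp hh) t
    rw [← hKH]
    exact ⟨hQ1, hQ2⟩
end
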